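/- Let $\sigma : \mathbb{R} \to \mathbb{R}$ be real analytic with $\sigma'(0) \neq 0$. Let $a, b \in \mathbb{R}^n$ with $a \neq b$. Then the set $\Omega = \{ w \in \mathbb{R}^n \mid \sigma(a^\top w) = \sigma(b^\top w) \}$ has Lebesgue measure zero. -/

import Mathlib

open MeasureTheory Matrix

/-- Zero set of a real-analytic function on ℝ that is not identically zero is countable. -/
lemma countable_zero_set_aux (g : ℝ → ℝ) (hg : AnalyticOnNhd ℝ g Set.univ)
    (h : ∃ t, g t ≠ 0) : {t | g t = 0}.Countable := by
  rcases hg.eqOn_zero_or_eventually_ne_zero_of_preconnected isPreconnected_univ with h0 | h1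
  · obtain ⟨t, ht⟩ := h
    exact absurd (h0 (Set.mem_univ t)) ht
  · have hmem : {x | g x ≠ 0} ∈ Filter.codiscrete ℝ := h1
    rw [mem_codiscrete'] at hmem
    have hd : DiscreteTopology ({x | g x ≠ 0}ᶜ : Set ℝ) := isDiscrete_iff_discreteTopology.mp hmem.2
    have hc : Countable ({x | g x ≠ 0}ᶜ : Set ℝ) :=
      TopologicalSpace.separableSpace_iff_countable.mp inferInstance
    have : ({x | g x ≠ 0}ᶜ : Set ℝ).Countable := Set.countable_coe_iff.mp hc
    convert this using 1
    ext x; simp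

lemma cons_analytic_left {n : ℕ} (y : Fin n → ℝ) :
    AnalyticOnNhd ℝ (fun t : ℝ => (Fin.cons t y : Fin (n+1) → ℝ)) Set.univ := by
  apply AnalyticOnNhd.pi
  intro j
  refine Fin.cases ?_ (fun k => ?_) j
  · simpa using analyticOnNhd_id (𝕜 := ℝ) (s := (Set.univ : Set ℝ))
  · simpa using analyticOnNhd_const (v := y k) (s := (Set.univ : Set ℝ))

lemma cons_analytic_right {n : ℕ} (t : ℝ) :
    AnalyticOnNhd ℝ (fun y : Fin n → ℝ => (Fin.cons t y : Fin (n+1) → ℝ)) Set.univ := by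
  apply AnalyticOnNhd.pi
  intro j
  refine Fin.cases ?_ (fun k => ?_) j
  · simpa using analyticOnNhd_const (v := t) (s := (Set.univ : Set (Fin n → ℝ)))
  · simp; exact (ContinuousLinearMap.proj (R := ℝ) (φ := fun _ : Fin n => ℝ) k).analyticOnNhd
      (Set.univ : Set (Fin n → ℝ))

lemma analytic_zero_null : ∀ (n : ℕ) (f : (Fin n → ℝ) → ℝ),
    AnalyticOnNhd ℝ f Set.univ → (∃ w, f w ≠ 0) →
    volume {w | f w = 0} = 0 := by
  intro n
  induction n with
  | zero =>
    rintro f hf ⟨w, hw⟩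
    have : {w : Fin 0 → ℝ | f w = 0} = ∅ := by
      ext v
      simp [Subsingleton.elim v w, hw]
    simp [this]
  | succ n ih =>
    rintro f hf ⟨w₀, hw₀⟩
    have hfc : Continuous f := continuousOn_univ.mp hf.continuousOn
    set S : Set (ℝ × (Fin n → ℝ)) := {p | f (Fin.cons p.1 p.2) = 0} with hS
    have hSm : MeasurableSet S := by
      have : Continuous (fun p : ℝ × (Fin n → ℝ) => f (Fin.cons p.1 p.2)) := by
        apply hfc.comp
        exact continuous_pi (fun j => Fin.cases continuous_fst
          (fun k => (continuous_apply k).comp continuous_snd) j)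
      exact isClosed_eq this continuous_const |>.measurableSet
    have hmp := MeasureTheory.volume_preserving_piFinSuccAbove (fun _ : Fin (n+1) => ℝ) 0
    have key : {w : Fin (n+1) → ℝ | f w = 0}
        = (MeasurableEquiv.piFinSuccAbove (fun _ : Fin (n+1) => ℝ) 0) ⁻¹' S := by
      ext w
      simp [hS, MeasurableEquiv.piFinSuccAbove, Fin.insertNthEquiv, Fin.removeNth_zero,
        Fin.cons_self_tail]
    rw [key, hmp.measure_preimage_equiv, Measure.volume_eq_prod, Measure.measure_prod_null hSm]
    -- bad set of t's
    set t₀ : ℝ := w₀ 0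
    set y₀ : Fin n → ℝ := Fin.tail w₀
    have hw₀' : f (Fin.cons t₀ y₀) ≠ 0 := by
      rwa [Fin.cons_self_tail]
    have hT : {t : ℝ | f (Fin.cons t y₀) = 0}.Countable := by
      apply countable_zero_set_aux
      · exact hf.comp (cons_analytic_left y₀) (Set.mapsTo_univ _ _)
      · exact ⟨t₀, hw₀'⟩
    have hTnull : volume {t : ℝ | f (Fin.cons t y₀) = 0} = 0 := hT.measure_zero _
    have hae : ∀ᵐ t : ℝ, f (Fin.cons t y₀) ≠ 0 := by
      rw [ae_iff]
      simpa using hTnull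
    filter_upwards [hae] with t ht
    show volume (Prod.mk t ⁻¹' S) = 0
    -- ht : ¬ f (Fin.cons t y₀) = 0
    have : Prod.mk t ⁻¹' S = {y : Fin n → ℝ | (fun y => f (Fin.cons t y)) y = 0} := rfl
    rw [this]
    exact ih _ (hf.comp (cons_analytic_right t) (Set.mapsTo_univ _ _)) ⟨y₀, by simpa using ht⟩

lemma dot_analytic {n : ℕ} (a : Fin n → ℝ) :
    AnalyticOnNhd ℝ (fun w : Fin n → ℝ => a ⬝ᵥ w) Set.univ := by
  have : (fun w : Fin n → ℝ => a ⬝ᵥ w) = fun w => ∑ i, a i * w i := rfl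
  rw [this]
  have h := Finset.analyticOnNhd_sum (f := fun i (w : Fin n → ℝ) => a i * w i) (s := Set.univ) Finset.univ (fun i _ =>
    analyticOnNhd_const.mul ((ContinuousLinearMap.proj (R := ℝ)
      (φ := fun _ : Fin n => ℝ) i).analyticOnNhd _))
  rwa [Finset.sum_fn] at h

theorem stmt_2 (n : ℕ) (σ : ℝ → ℝ) (hσ : AnalyticOnNhd ℝ σ Set.univ)
    (hσ' : deriv σ 0 ≠ 0) (a b : Fin n → ℝ) (hab : a ≠ b) :
    volume {w : Fin n → ℝ | σ (a ⬝ᵥ w) = σ (b ⬝ᵥ w)} = 0 := by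
  set f : (Fin n → ℝ) → ℝ := fun w => σ (a ⬝ᵥ w) - σ (b ⬝ᵥ w) with hfdef
  have hset : {w : Fin n → ℝ | σ (a ⬝ᵥ w) = σ (b ⬝ᵥ w)} = {w | f w = 0} := by
    ext w; simp [hfdef, sub_eq_zero]
  have hfa : AnalyticOnNhd ℝ f Set.univ :=
    (hσ.comp (dot_analytic a) (Set.mapsTo_univ _ _)).sub
      (hσ.comp (dot_analytic b) (Set.mapsTo_univ _ _))
  have hne : ∃ w, f w ≠ 0 := by
    by_contra hc
    push_neg at hc
    obtain ⟨i, hi⟩ := Function.ne_iff.mp hab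
    have hσd : HasDerivAt σ (deriv σ 0) 0 :=
      (hσ 0 (Set.mem_univ 0)).differentiableAt.hasDerivAt
    have h1 : HasDerivAt (fun t : ℝ => σ (t * a i)) (deriv σ 0 * a i) 0 := by
      have h2 : HasDerivAt (fun t : ℝ => t * a i) (a i) 0 := hasDerivAt_mul_const (a i)
      have hσd' : HasDerivAt σ (deriv σ 0) (0 * a i) := by rwa [zero_mul]
      exact hσd'.comp (0:ℝ) h2
    have h1b : HasDerivAt (fun t : ℝ => σ (t * b i)) (deriv σ 0 * b i) 0 := by
      have h2 : HasDerivAt (fun t : ℝ => t * b i) (b i) 0 := hasDerivAt_mul_const (b i)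
      have hσd' : HasDerivAt σ (deriv σ 0) (0 * b i) := by rwa [zero_mul]
      exact hσd'.comp (0:ℝ) h2
    have hfun : (fun t : ℝ => σ (t * a i)) = (fun t : ℝ => σ (t * b i)) := by
      funext t
      have := hc (t • (Pi.single i 1 : Fin n → ℝ))
      rw [hfdef] at this
      simp only [dotProduct_smul, dotProduct_single, mul_one, smul_eq_mul,
        sub_eq_zero] at this
      simpa [mul_comm] using this
    have := h1.unique (hfun ▸ h1b)
    exact hi (mul_left_cancel₀ hσ' this)
  rw [hset]
  exact analytic_zero_null n f hfa hne
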